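/- RBF interpolation with the Gaussian kernel is uniquely solvable for any choice of data locations: for every σ > 0, every choice of pairwise distinct points v₁, …, v_N ∈ ℝ^d, and every vector of target values (y₁, …, y_N) ∈ ℝ^N, there exist unique weights (w₁, …, w_N) ∈ ℝ^N such that Σ_{j=1}^{N} w_j · exp(−‖v_i − v_j‖²/(2σ²)) = y_i for every i = 1, …, N. -/

import Mathlib

open Finset

-- from vanishing on "sequence monomials" to vanishing on powers
lemma aux_pow_form {d N : ℕ} (v : Fin N → Fin d → ℝ) (u : Fin N → ℝ)
    (H : ∀ (n : ℕ) (f : Fin n → Fin d), ∑ i, u i * ∏ m, v i (f m) = 0)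
    (g : Fin d → ℕ) : ∑ i, u i * ∏ k, v i k ^ g k = 0 := by
  classical
  set n := Fintype.card ((k : Fin d) × Fin (g k)) with hn
  have e := (Fintype.equivFin ((k : Fin d) × Fin (g k))).symm
  have key : ∀ x : Fin d → ℝ, ∏ m : Fin n, x ((e m).1) = ∏ k, x k ^ g k := by
    intro x
    have h1 : ∏ m : Fin n, x ((e m).1) = ∏ p : (k : Fin d) × Fin (g k), x p.1 :=
      Equiv.prod_comp e (fun p => x p.1)
    rw [h1, ← Finset.univ_sigma_univ, Finset.prod_sigma]
    simp
  have := H n (fun m => (e m).1)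
  simpa only [key] using this

lemma aux_poly_form {d N : ℕ} (v : Fin N → Fin d → ℝ) (u : Fin N → ℝ)
    (H : ∀ (n : ℕ) (f : Fin n → Fin d), ∑ i, u i * ∏ m, v i (f m) = 0)
    (p : MvPolynomial (Fin d) ℝ) : ∑ i, u i * MvPolynomial.eval (v i) p = 0 := by
  classical
  induction p using MvPolynomial.induction_on' with
  | monomial s a =>
    simp only [MvPolynomial.eval_monomial]
    have hs : ∀ x : Fin d → ℝ, (s.prod fun k e => x k ^ e) = ∏ k, x k ^ s k := by
      intro x
      exact Finsupp.prod_fintype s (fun k e => x k ^ e) (fun k => pow_zero _)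
    simp only [hs]
    have := aux_pow_form v u H s
    calc ∑ i, u i * (a * ∏ k, v i k ^ s k) = a * ∑ i, u i * ∏ k, v i k ^ s k := by
          rw [Finset.mul_sum]; congr 1; ext i; ring
      _ = 0 := by rw [this, mul_zero]
  | add p q hp hq =>
    simp only [map_add, mul_add, Finset.sum_add_distrib, hp, hq, add_zero]

lemma aux_sep {d N : ℕ} (v : Fin N → Fin d → ℝ) (hv : Function.Injective v)
    (u : Fin N → ℝ)
    (H : ∀ (n : ℕ) (f : Fin n → Fin d), ∑ i, u i * ∏ m, v i (f m) = 0) :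
    u = 0 := by
  classical
  funext i₀
  set p : MvPolynomial (Fin d) ℝ :=
    ∏ j ∈ Finset.univ.erase i₀,
      (∑ k, (MvPolynomial.X k - MvPolynomial.C (v j k)) ^ 2) with hp
  have heval : ∀ i, MvPolynomial.eval (v i) p
      = ∏ j ∈ Finset.univ.erase i₀, (∑ k, (v i k - v j k) ^ 2) := by
    intro i; simp [hp]
  have hzero : ∀ i, i ≠ i₀ → MvPolynomial.eval (v i) p = 0 := by
    intro i hi
    rw [heval]
    apply Finset.prod_eq_zero (Finset.mem_erase.2 ⟨hi, Finset.mem_univ i⟩)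
    simp
  have hpos : MvPolynomial.eval (v i₀) p ≠ 0 := by
    rw [heval]
    apply ne_of_gt
    apply Finset.prod_pos
    intro j hj
    have hne : v i₀ ≠ v j := fun h => (Finset.mem_erase.1 hj).1 (hv h).symm
    obtain ⟨k, hk⟩ : ∃ k, v i₀ k ≠ v j k := by
      by_contra h
      push_neg at h
      exact hne (funext h)
    have h2 : v i₀ k - v j k ≠ 0 := sub_ne_zero.2 hk
    calc (0:ℝ) < (v i₀ k - v j k) ^ 2 := pow_two_pos_of_ne_zero h2
      _ ≤ ∑ k, (v i₀ k - v j k) ^ 2 :=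
        Finset.single_le_sum (f := fun k => (v i₀ k - v j k) ^ 2)
          (fun k _ => sq_nonneg _) (Finset.mem_univ k)
  have hsum := aux_poly_form v u H p
  rw [Finset.sum_eq_single i₀ (fun i _ hi => by rw [hzero i hi, mul_zero])
    (fun h => absurd (Finset.mem_univ i₀) h)] at hsum
  have := mul_eq_zero.1 hsum
  simpa [hpos] using this

-- sum-of-squares expansion of the power-of-dot-product quadratic form
lemma aux_sq {d N : ℕ} (v : Fin N → Fin d → ℝ) (u : Fin N → ℝ) (n : ℕ) :
    ∑ i, ∑ j, u i * u j * (∑ k, v i k * v j k) ^ n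
      = ∑ f ∈ (Finset.univ : Finset (Fin n → Fin d)),
          (∑ i, u i * ∏ m, v i (f m)) ^ 2 := by
  classical
  have hpow : ∀ i j : Fin N, (∑ k, v i k * v j k) ^ n
      = ∑ f ∈ (Finset.univ : Finset (Fin n → Fin d)),
          (∏ m, v i (f m)) * (∏ m, v j (f m)) := by
    intro i j
    calc (∑ k, v i k * v j k) ^ n
        = ∏ _m : Fin n, ∑ k, v i k * v j k := by simp
      _ = ∑ f ∈ Fintype.piFinset (fun _ : Fin n => (Finset.univ : Finset (Fin d))),
            ∏ m, v i (f m) * v j (f m) := Finset.prod_univ_sum _ _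
      _ = ∑ f ∈ (Finset.univ : Finset (Fin n → Fin d)),
            ∏ m, v i (f m) * v j (f m) := by rw [Fintype.piFinset_univ]
      _ = ∑ f ∈ (Finset.univ : Finset (Fin n → Fin d)),
            (∏ m, v i (f m)) * (∏ m, v j (f m)) :=
          Finset.sum_congr rfl fun f _ => Finset.prod_mul_distrib
  calc ∑ i, ∑ j, u i * u j * (∑ k, v i k * v j k) ^ n
      = ∑ i, ∑ j, ∑ f ∈ (Finset.univ : Finset (Fin n → Fin d)),
          (u i * ∏ m, v i (f m)) * (u j * ∏ m, v j (f m)) := by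
        apply Finset.sum_congr rfl; intro i _
        apply Finset.sum_congr rfl; intro j _
        rw [hpow, Finset.mul_sum]
        apply Finset.sum_congr rfl; intro f _
        ring
    _ = ∑ i, ∑ f ∈ (Finset.univ : Finset (Fin n → Fin d)), ∑ j,
          (u i * ∏ m, v i (f m)) * (u j * ∏ m, v j (f m)) := by
        apply Finset.sum_congr rfl; intro i _
        exact Finset.sum_comm
    _ = ∑ f ∈ (Finset.univ : Finset (Fin n → Fin d)), ∑ i, ∑ j,
          (u i * ∏ m, v i (f m)) * (u j * ∏ m, v j (f m)) := Finset.sum_comm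
    _ = ∑ f ∈ (Finset.univ : Finset (Fin n → Fin d)),
          (∑ i, u i * ∏ m, v i (f m)) ^ 2 := by
        apply Finset.sum_congr rfl; intro f _
        rw [sq, Finset.sum_mul_sum]

lemma aux_key {d N : ℕ} (c : ℝ) (hc : 0 < c) (v : Fin N → Fin d → ℝ)
    (hv : Function.Injective v) (u : Fin N → ℝ)
    (hQ : ∑ i, ∑ j, u i * u j * Real.exp (c * ∑ k, v i k * v j k) = 0) :
    u = 0 := by
  classical
  set B : Fin N → Fin N → ℝ := fun i j => ∑ k, v i k * v j k with hB
  set a : Fin N → Fin N → ℕ → ℝ :=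
    fun i j n => u i * u j * ((c * B i j) ^ n / n.factorial) with ha
  have hsumm : ∀ i j, Summable (a i j) := fun i j =>
    (Real.summable_pow_div_factorial (c * B i j)).mul_left _
  have hexp : ∀ i j, u i * u j * Real.exp (c * B i j) = ∑' n, a i j n := by
    intro i j
    rw [Real.exp_eq_exp_ℝ, NormedSpace.exp_eq_tsum_div]
    exact (tsum_mul_left).symm
  set T : ℕ → ℝ := fun n => ∑ i, ∑ j, a i j n with hT
  have hsummT : ∀ i, Summable fun n => ∑ j, a i j n := fun i =>
    summable_sum fun j _ => hsumm i j
  have hsummT2 : Summable T := summable_sum fun i _ => hsummT i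
  have htsum : ∑' n, T n = 0 := by
    rw [← hQ]
    simp only [hT]
    rw [Summable.tsum_finsetSum fun i _ => hsummT i]
    apply Finset.sum_congr rfl; intro i _
    rw [Summable.tsum_finsetSum fun j _ => hsumm i j]
    apply Finset.sum_congr rfl; intro j _
    exact (hexp i j).symm
  -- each T n is (c^n/n!) times a sum of squares
  have hTsq : ∀ n, T n = (c ^ n / n.factorial) *
      ∑ f ∈ (Finset.univ : Finset (Fin n → Fin d)),
        (∑ i, u i * ∏ m, v i (f m)) ^ 2 := by
    intro n
    rw [← aux_sq v u n, Finset.mul_sum]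
    apply Finset.sum_congr rfl; intro i _
    rw [Finset.mul_sum]
    apply Finset.sum_congr rfl; intro j _
    simp only [ha, mul_pow]
    ring
  have hTnonneg : ∀ n, 0 ≤ T n := by
    intro n
    rw [hTsq]
    apply mul_nonneg (by positivity)
    exact Finset.sum_nonneg fun f _ => sq_nonneg _
  have hT0 : ∀ n, T n = 0 := by
    intro n
    refine le_antisymm ?_ (hTnonneg n)
    calc T n ≤ ∑' m, T m := Summable.le_tsum hsummT2 n fun m _ => hTnonneg m
      _ = 0 := htsum
  have H : ∀ (n : ℕ) (f : Fin n → Fin d), ∑ i, u i * ∏ m, v i (f m) = 0 := by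
    intro n f
    have h1 := hT0 n
    rw [hTsq] at h1
    have hcn : (0:ℝ) < c ^ n / n.factorial := by positivity
    have h2 : ∑ g ∈ (Finset.univ : Finset (Fin n → Fin d)),
        (∑ i, u i * ∏ m, v i (g m)) ^ 2 = 0 := by
      rcases mul_eq_zero.1 h1 with h | h
      · exact absurd h (ne_of_gt hcn)
      · exact h
    have h3 := (Finset.sum_eq_zero_iff_of_nonneg fun g _ => sq_nonneg _).1 h2 f
      (Finset.mem_univ f)
    exact pow_eq_zero_iff two_ne_zero |>.1 h3
  exact aux_sep v hv u H

/-- Gaussian RBF interpolation is uniquely solvable for any choice of pairwise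
distinct data locations: for every `σ > 0`, pairwise distinct `v₁, …, v_N ∈ ℝ^d`
and target values `y ∈ ℝ^N`, there exist unique weights `w ∈ ℝ^N` with
`Σ_j w_j · exp(−‖v_i − v_j‖²/(2σ²)) = y_i` for all `i`. -/
theorem gaussian_rbf_interpolation_unique (σ : ℝ) (hσ : 0 < σ) (d N : ℕ)
    (v : Fin N → EuclideanSpace ℝ (Fin d)) (hv : Function.Injective v)
    (y : Fin N → ℝ) :
    ∃! w : Fin N → ℝ,
      ∀ i : Fin N, ∑ j, w j * Real.exp (-‖v i - v j‖ ^ 2 / (2 * σ ^ 2)) = y i := by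
  classical
  set M : Matrix (Fin N) (Fin N) ℝ :=
    Matrix.of fun i j => Real.exp (-‖v i - v j‖ ^ 2 / (2 * σ ^ 2)) with hM
  -- norm expansion
  have hnorm : ∀ i j : Fin N, ‖v i - v j‖ ^ 2 = ∑ k, (v i k - v j k) ^ 2 := by
    intro i j
    rw [EuclideanSpace.norm_eq, Real.sq_sqrt (by positivity)]
    apply Finset.sum_congr rfl
    intro k _
    have : (v i - v j) k = v i k - v j k := by simp
    rw [this, Real.norm_eq_abs, sq_abs]
  -- kernel factorization
  set D : Fin N → ℝ := fun i => Real.exp (-(∑ k, v i k ^ 2) / (2 * σ ^ 2)) with hD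
  have hfact : ∀ i j : Fin N, M i j
      = D i * D j * Real.exp (σ⁻¹ ^ 2 * ∑ k, v i k * v j k) := by
    intro i j
    simp only [hM, hD, Matrix.of_apply, ← Real.exp_add]
    congr 1
    rw [hnorm]
    have hexpand : ∑ k, (v i k - v j k) ^ 2
        = (∑ k, v i k ^ 2) - 2 * (∑ k, v i k * v j k) + ∑ k, v j k ^ 2 := by
      rw [Finset.mul_sum, ← Finset.sum_sub_distrib, ← Finset.sum_add_distrib]
      apply Finset.sum_congr rfl
      intro k _; ring
    rw [hexpand]
    field_simp
    ring
  -- injectivity of the kernel matrix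
  have hinj : Function.Injective M.mulVecLin := by
    rw [← LinearMap.ker_eq_bot, LinearMap.ker_eq_bot']
    intro w hw
    have hQ : ∑ i, ∑ j, w i * w j * M i j = 0 := by
      have : ∀ i, ∑ j, M i j * w j = 0 := fun i => congrFun hw i
      calc ∑ i, ∑ j, w i * w j * M i j
          = ∑ i, w i * ∑ j, M i j * w j := by
            apply Finset.sum_congr rfl; intro i _
            rw [Finset.mul_sum]
            apply Finset.sum_congr rfl; intro j _; ring
        _ = 0 := by simp [this]
    set u : Fin N → ℝ := fun i => w i * D i with hu
    have hQ' : ∑ i, ∑ j, u i * u j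
        * Real.exp (σ⁻¹ ^ 2 * ∑ k, v i k * v j k) = 0 := by
      rw [← hQ]
      apply Finset.sum_congr rfl; intro i _
      apply Finset.sum_congr rfl; intro j _
      rw [hfact]
      simp only [hu]
      ring
    have hv' : Function.Injective (fun i k => v i k : Fin N → Fin d → ℝ) := by
      intro i j h
      apply hv
      ext k
      exact congrFun h k
    have hu0 : u = 0 :=
      aux_key (σ⁻¹ ^ 2) (by positivity) _ hv' u hQ'
    funext i
    have : u i = 0 := congrFun hu0 i
    have hDpos : 0 < D i := Real.exp_pos _
    have := mul_eq_zero.1 this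
    simpa [ne_of_gt hDpos] using this
  have hsurj : Function.Surjective M.mulVecLin :=
    (LinearMap.injective_iff_surjective).1 hinj
  obtain ⟨w₀, hw₀⟩ := hsurj y
  have hiff : ∀ w : Fin N → ℝ,
      (∀ i : Fin N, ∑ j, w j * Real.exp (-‖v i - v j‖ ^ 2 / (2 * σ ^ 2)) = y i)
        ↔ M.mulVecLin w = y := by
    intro w
    rw [funext_iff]
    apply forall_congr'
    intro i
    have : M.mulVecLin w i = ∑ j, w j * M i j := by
      simp [Matrix.mulVecLin, Matrix.mulVec, dotProduct, mul_comm]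
    rw [this]
    rfl
  refine ⟨w₀, (hiff w₀).2 hw₀, fun w hw => ?_⟩
  exact hinj (((hiff w).1 hw).trans hw₀.symm)
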